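/- For every N ∈ ℕ and every 0 ≤ n ≤ N, almost surely: L^{(2−2α)(N−n)} · S_{N−n}Q_{N−n}( ξ_{−N} · Γ_{N−n}ξ_{−N} − c_{N−n} ) = Σ_{k=1}^{N−n} L^{(2−2α)k} S_kQ_k( ξ_{−n−k} ⋄ P_1 ξ_{−n−k} ), where Γ_m := Σ_{j=1}^m L^{2(j−1)} P_j, the product ξ_{−N} · Γ_{N−n}ξ_{−N} is pointwise, c_{N−n} := E[ ξ_{−N}(x)·(Γ_{N−n}ξ_{−N})(x) ] = (1 − L^{−d}) Σ_{k=1}^{N−n} L^{(2−d)(k−1)} (independent of x ∈ Λ^N), and (ξ_{−m} ⋄ P_1ξ_{−m})(x) := ξ_{−m}(x)·(P_1ξ_{−m})(x) − (1 − L^{−d}). -/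

import Mathlib

open MeasureTheory ProbabilityTheory Filter

namespace Hier

/-! ## The hierarchical lattice

A point of the unit lattice `Λ^N = (ℤ/L^Nℤ)^d` (for `L` odd) is encoded by its
balanced base-`L` digits: the coordinate `i` of the point is
`∑_{k<N} L^k · (x i k)`, where the digit `x i k ∈ ZMod L` is identified with its
representative in `{-(L-1)/2, …, (L-1)/2}`.  The level-`n` block `B_n(x)` is the
set of points sharing with `x` all digits of index `≥ n`, and the centre of a
level-`n` block is the point all of whose digits of index `< n` vanish. -/

variable (L d : ℕ)

/-- A point of the unit lattice `Λ^N`, in hierarchical digit coordinates. -/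
abbrev Pt (N : ℕ) : Type := Fin d → Fin N → ZMod L

/-- Transport along an equality of lattice sizes. -/
def reindex {M M' : ℕ} (h : M = M') (z : Pt L d M) : Pt L d M' :=
  fun i k => z i (Fin.cast h.symm k)

/-- Replace the `n` lowest digits of `x` by `a`; as `a` varies this enumerates
the level-`n` block `B_n(x)` of `x`. -/
def paste {N n : ℕ} (hn : n ≤ N) (x : Pt L d N) (a : Fin d → Fin n → ZMod L) :
    Pt L d N :=
  fun i k => if h : (k : ℕ) < n then a i ⟨k, h⟩ else x i k

/-- The centre of the level-`m` block of `Λ^N` indexed by `z ∈ Λ^{N-m}` (the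
point `L^m z`). -/
def embed {N m : ℕ} (hm : m ≤ N) (z : Pt L d (N - m)) : Pt L d N :=
  fun i k =>
    if h : m ≤ (k : ℕ) then z i ⟨(k : ℕ) - m, by have := k.isLt; omega⟩ else 0

variable [NeZero L]

/-- The averaging operator `Q_n g (x) = L^{-nd} ∑_{y ∈ B_n(x)} g(y)`. -/
noncomputable def Qop {N : ℕ} (n : ℕ) (hn : n ≤ N) (g : Pt L d N → ℝ) :
    Pt L d N → ℝ :=
  fun x => ((L : ℝ) ^ (n * d))⁻¹ * ∑ a : Fin d → Fin n → ZMod L, g (paste L d hn x a)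

/-- The fluctuation operator `P_n = Q_{n-1} - Q_n` (for `1 ≤ n ≤ N`). -/
noncomputable def Pop {N : ℕ} (n : ℕ) (hn : n ≤ N) (g : Pt L d N → ℝ) :
    Pt L d N → ℝ :=
  fun x => Qop L d (n - 1) (le_trans (Nat.sub_le n 1) hn) g x - Qop L d n hn g x

/-- The rescaling `S_m`, sending `f : Λ^N → ℝ` to `S_m f : Λ^{N-m} → ℝ`,
`(S_m f)(z) = f(L^m z)`.  In particular `scale … (Qop …)` is the coarse
graining `S_m Q_m`. -/
noncomputable def scale {N m : ℕ} (hm : m ≤ N) (f : Pt L d N → ℝ) :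
    Pt L d (N - m) → ℝ :=
  fun z => f (embed L d hm z)

/-- The hierarchical Green operator `G_N = ∑_{k=1}^N L^{2(k-1)} P_k`. -/
noncomputable def green (N : ℕ) (g : Pt L d N → ℝ) : Pt L d N → ℝ :=
  fun x => ∑ k : Fin N, (L : ℝ) ^ (2 * (k : ℕ)) * Pop L d ((k : ℕ) + 1) k.isLt g x

/-- The (negative of the) hierarchical Laplacian
`(-Δ_{H,N}) = ∑_{n=1}^N L^{-2(n-1)} P_n`. -/
noncomputable def lap (N : ℕ) (g : Pt L d N → ℝ) : Pt L d N → ℝ :=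
  fun x => ∑ k : Fin N, ((L : ℝ) ^ (2 * (k : ℕ)))⁻¹ * Pop L d ((k : ℕ) + 1) k.isLt g x

/-- The fluctuation propagator `Γ_m = ∑_{k=1}^m L^{2(k-1)} P_k` acting on
functions on `Λ^N` (`m ≤ N`). -/
noncomputable def gammaProp {N : ℕ} (m : ℕ) (hm : m ≤ N) (g : Pt L d N → ℝ) :
    Pt L d N → ℝ :=
  fun x => ∑ k : Fin m, (L : ℝ) ^ (2 * (k : ℕ)) *
    Pop L d ((k : ℕ) + 1) (le_trans k.isLt hm) g x

/-- `x` and `y` lie in the same level-`m` block of `Λ^N`. -/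
def sameBlock {N : ℕ} (m : ℕ) (x y : Pt L d N) : Prop :=
  ∀ (i : Fin d) (k : Fin N), m ≤ (k : ℕ) → x i k = y i k


variable {Ω : Type*} [MeasurableSpace Ω]

/-- A **consistent hierarchical white noise**: a family `(ξ_{-n})_{n ∈ ℕ}` of
random functions `Λ^n → ℝ` such that for every `n` the variables
`(ξ_{-n}(x))_{x ∈ Λ^n}` are independent standard Gaussians and, for every `n`,
`ξ_{-n} = L^{2-α} · S₁Q₁ ξ_{-(n+1)}` almost surely, where `α := 2 - d/2`. -/
structure WhiteNoise (P : Measure Ω) where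
  ξ : (n : ℕ) → Pt L d n → Ω → ℝ
  meas : ∀ n x, Measurable (ξ n x)
  gauss : ∀ n x, P.map (ξ n x) = gaussianReal 0 1
  indep : ∀ n, iIndepFun (ξ n) P
  consistent : ∀ n : ℕ, ∀ᵐ ω ∂P, ∀ z : Pt L d n,
    ξ n z ω = (L : ℝ) ^ ((2 : ℝ) - ((2 : ℝ) - (d : ℝ) / 2)) *
      scale L d (Nat.le_add_left 1 n)
        (Qop L d 1 (Nat.le_add_left 1 n) (fun y => ξ (n + 1) y ω))
        (reindex L d (by omega) z)

/-- The Wick product `(f ⋄ P₁f)(x) = f(x)·(P₁f)(x) − (1 − L^{-d})` of a field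
of independent standard Gaussians with its `P₁`-fluctuation. -/
noncomputable def wickP1 {N : ℕ} (hN : 1 ≤ N) (f : Pt L d N → ℝ) :
    Pt L d N → ℝ :=
  fun x => f x * Pop L d 1 hN f x - (1 - ((L : ℝ) ^ d)⁻¹)

/-- The second-chaos field
`db^{(N)}_{-n} = ∑_{k=1}^{N-n} L^{(2-2α)k} S_k Q_k (ξ_{-n-k} ⋄ P₁ ξ_{-n-k})`,
with `α := 2 - d/2`. -/
noncomputable def db {P : Measure Ω} (W : WhiteNoise L d P) (N n : ℕ) (ω : Ω) :
    Pt L d n → ℝ :=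
  fun z => ∑ k : Fin (N - n),
    (L : ℝ) ^ (((2 : ℝ) - 2 * ((2 : ℝ) - (d : ℝ) / 2)) * (((k : ℕ) : ℝ) + 1)) *
      scale L d (Nat.le_add_left ((k : ℕ) + 1) n)
        (Qop L d ((k : ℕ) + 1) (Nat.le_add_left ((k : ℕ) + 1) n)
          (wickP1 L d (by omega) (fun y => W.ξ (n + ((k : ℕ) + 1)) y ω)))
        (reindex L d (by omega) z)

/-- `L^{-κ_s n} · max( max_{x ∈ Λ^n} |ξ_{-n}(x)| , max_{x ∈ Λ^n} |db^{(N)}_{-n}(x)|^{1/2} )`. -/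
noncomputable def normBlock {P : Measure Ω} (W : WhiteNoise L d P) (κs : ℝ)
    (N n : ℕ) (ω : Ω) : ℝ :=
  (L : ℝ) ^ (-(κs * (n : ℝ))) *
    max (⨆ x : Pt L d n, |W.ξ n x ω|)
      (⨆ x : Pt L d n, |db L d W N n ω x| ^ ((1 : ℝ) / 2))

/-- The norm `⦀ξ, db⦀ = sup_{N ∈ ℕ} max_{0 ≤ n ≤ N} normBlock(N, n)`,
valued in `ℝ≥0∞`. -/
noncomputable def enorm {P : Measure Ω} (W : WhiteNoise L d P) (κs : ℝ)
    (ω : Ω) : ENNReal :=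
  ⨆ (N : ℕ) (n : Fin (N + 1)), ENNReal.ofReal (normBlock L d W κs N n ω)

/-- The good event `Ω_g = { ⦀ξ, db⦀ ≤ (2g)⁻¹ }`. -/
def goodEvent {P : Measure Ω} (W : WhiteNoise L d P) (κs g : ℝ) : Set Ω :=
  {ω | enorm L d W κs ω ≤ ENNReal.ofReal (2 * g)⁻¹}

section PartA
set_option linter.unusedSectionVars false

lemma Lpos : (0:ℝ) < (L:ℝ) := by
  exact_mod_cast Nat.pos_of_ne_zero (NeZero.ne L)

lemma card_digits (j : ℕ) :
    Fintype.card (Fin d → Fin j → ZMod L) = L ^ (j * d) := by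
  simp [ZMod.card, ← pow_mul, mul_comm]

lemma paste_paste {N j : ℕ} (hj : j ≤ N) (x : Pt L d N) (a b : Fin d → Fin j → ZMod L) :
    paste L d hj (paste L d hj x a) b = paste L d hj x b := by
  funext i k
  unfold paste
  by_cases h : (k:ℕ) < j
  · simp [h]
  · simp [h]

lemma Qop_paste {N j : ℕ} (hj : j ≤ N) (g : Pt L d N → ℝ) (x : Pt L d N)
    (a : Fin d → Fin j → ZMod L) :
    Qop L d j hj g (paste L d hj x a) = Qop L d j hj g x := by
  unfold Qop
  congr 1
  exact Finset.sum_congr rfl fun b _ => by rw [paste_paste]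

lemma local_mono {N j j' : ℕ} (hj : j ≤ N) (hj' : j' ≤ N) (hjj' : j ≤ j') {h : Pt L d N → ℝ}
    (hloc : ∀ y a, h (paste L d hj' y a) = h y) (y : Pt L d N) (b : Fin d → Fin j → ZMod L) :
    h (paste L d hj y b) = h y := by
  have hpaste : paste L d hj y b =
      paste L d hj' y (fun i t => if ht : (t:ℕ) < j then b i ⟨t, ht⟩
        else y i ⟨t, lt_of_lt_of_le t.isLt hj'⟩) := by
    funext i k
    unfold paste
    by_cases h1 : (k:ℕ) < j
    · simp [h1, lt_of_lt_of_le h1 hjj']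
    · by_cases h2 : (k:ℕ) < j'
      · simp [h1, h2]
      · simp [h1, h2]
  rw [hpaste, hloc]

def combine (j r : ℕ) (b : Fin d → Fin j → ZMod L) (a : Fin d → Fin r → ZMod L) :
    Fin d → Fin (j + r) → ZMod L :=
  fun i t => if h : (t:ℕ) < j then b i ⟨t, h⟩
    else a i ⟨(t:ℕ) - j, by have := t.isLt; omega⟩

def splitEquiv (j r : ℕ) :
    ((Fin d → Fin j → ZMod L) × (Fin d → Fin r → ZMod L)) ≃ (Fin d → Fin (j + r) → ZMod L) where
  toFun p := combine L d j r p.1 p.2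
  invFun c := (fun i t => c i ⟨t, by omega⟩, fun i t => c i ⟨j + t, by omega⟩)
  left_inv := by
    rintro ⟨b, a⟩
    refine Prod.ext ?_ ?_ <;> funext i t <;> dsimp only <;> unfold combine
    · rw [dif_pos t.isLt]
    · rw [dif_neg (by simp only [Fin.val_mk]; omega)]
      exact congrArg (a i) (Fin.ext (by simp only [Fin.val_mk]; omega))
  right_inv := by
    intro c
    funext i t
    dsimp only
    unfold combine
    by_cases h : (t:ℕ) < j
    · rw [dif_pos h]
    · rw [dif_neg h]
      exact congrArg (c i) (Fin.ext (by simp only [Fin.val_mk]; omega))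

lemma sum_combine {j r : ℕ} (F : (Fin d → Fin (j + r) → ZMod L) → ℝ) :
    ∑ c, F c = ∑ a : Fin d → Fin r → ZMod L, ∑ b : Fin d → Fin j → ZMod L,
      F (combine L d j r b a) := by
  rw [← Equiv.sum_comp (splitEquiv L d j r) F, Fintype.sum_prod_type_right]
  rfl

lemma paste_combine {N j r : ℕ} (hjr : j + r ≤ N) (hj : j ≤ N) (x : Pt L d N)
    (b b' : Fin d → Fin j → ZMod L) (a : Fin d → Fin r → ZMod L) :
    paste L d hjr x (combine L d j r b a) =
      paste L d hj (paste L d hjr x (combine L d j r b' a)) b := by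
  funext i k
  unfold paste combine
  by_cases h1 : (k:ℕ) < j
  · rw [dif_pos (show (k:ℕ) < j + r by omega), dif_pos h1, dif_pos h1]
  · by_cases h2 : (k:ℕ) < j + r
    · rw [dif_pos h2, dif_neg h1, dif_neg h1, dif_pos h2, dif_neg h1]
    · rw [dif_neg h2, dif_neg h1, dif_neg h2]

lemma Qop_split {N j r : ℕ} (hjr : j + r ≤ N) (hj : j ≤ N) (F : Pt L d N → ℝ) (x : Pt L d N) :
    Qop L d (j + r) hjr F x = ((L:ℝ) ^ (r * d))⁻¹ *
      ∑ a : Fin d → Fin r → ZMod L,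
        Qop L d j hj F (paste L d hjr x (combine L d j r (fun _ _ => 0) a)) := by
  unfold Qop
  rw [sum_combine L d (fun c => F (paste L d hjr x c))]
  rw [Finset.mul_sum, Finset.mul_sum]
  refine Finset.sum_congr rfl fun a _ => ?_
  have h1 : ∀ b, F (paste L d hjr x (combine L d j r b a)) =
      F (paste L d hj (paste L d hjr x (combine L d j r (fun _ _ => 0) a)) b) := fun b => by
    rw [← paste_combine L d hjr hj x b (fun _ _ => 0) a]
  simp only [h1]
  rw [← mul_assoc]
  congr 1
  rw [show (j + r) * d = r * d + j * d by ring, pow_add, mul_inv]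

lemma Qop_of_local {N j : ℕ} (hj : j ≤ N) {h : Pt L d N → ℝ}
    (hloc : ∀ y a, h (paste L d hj y a) = h y) (x : Pt L d N) :
    Qop L d j hj h x = h x := by
  unfold Qop
  simp only [hloc]
  rw [Finset.sum_const, Finset.card_univ, card_digits, nsmul_eq_mul, Nat.cast_pow, ← mul_assoc,
    inv_mul_cancel₀ (ne_of_gt (pow_pos (Lpos L) _)), one_mul]

lemma Qop_natcongr {N j j' : ℕ} (h : j = j') (hj : j ≤ N) (hj' : j' ≤ N)
    (g : Pt L d N → ℝ) (x : Pt L d N) :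
    Qop L d j hj g x = Qop L d j' hj' g x := by subst h; rfl

lemma Qop_Qop {N j m : ℕ} (hj : j ≤ N) (hm : m ≤ N) (hjm : j ≤ m)
    (g : Pt L d N → ℝ) (x : Pt L d N) :
    Qop L d m hm (Qop L d j hj g) x = Qop L d m hm g x := by
  obtain ⟨r, rfl⟩ := Nat.exists_eq_add_of_le hjm
  rw [Qop_split L d hm hj _ x, Qop_split L d hm hj g x]
  refine congrArg _ (Finset.sum_congr rfl fun a _ => ?_)
  exact Qop_of_local L d hj (fun y b => Qop_paste L d hj g y b) _

lemma Qop_congr_fun {N r : ℕ} (hr : r ≤ N) {f g : Pt L d N → ℝ}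
    (hfg : ∀ y, f y = g y) (x : Pt L d N) :
    Qop L d r hr f x = Qop L d r hr g x := by
  unfold Qop
  exact congrArg _ (Finset.sum_congr rfl fun a _ => hfg _)

lemma Qop_mul_local {N j m : ℕ} (hj : j ≤ N) (hm : m ≤ N) (hjm : j ≤ m)
    (f g : Pt L d N → ℝ) (hg : ∀ y a, g (paste L d hj y a) = g y) (x : Pt L d N) :
    Qop L d m hm (fun y => f y * g y) x =
      Qop L d m hm (fun y => Qop L d j hj f y * g y) x := by
  have A : ∀ (f' : Pt L d N → ℝ) (y : Pt L d N),
      Qop L d j hj (fun t => f' t * g t) y = Qop L d j hj f' y * g y := by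
    intro f' y
    unfold Qop
    simp only [hg]
    rw [← Finset.sum_mul, ← mul_assoc]
  obtain ⟨r, rfl⟩ := Nat.exists_eq_add_of_le hjm
  rw [Qop_split L d hm hj _ x, Qop_split L d hm hj _ x]
  refine congrArg _ (Finset.sum_congr rfl fun a _ => ?_)
  rw [A f _, A (Qop L d j hj f) _]
  congr 1
  exact (Qop_of_local L d hj (fun y b => Qop_paste L d hj f y b) _).symm

lemma Qop_sub_const {N r : ℕ} (hr : r ≤ N) (g : Pt L d N → ℝ) (C : ℝ) (x : Pt L d N) :
    Qop L d r hr (fun y => g y - C) x = Qop L d r hr g x - C := by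
  unfold Qop
  rw [Finset.sum_sub_distrib, Finset.sum_const, Finset.card_univ, card_digits, nsmul_eq_mul,
    Nat.cast_pow, mul_sub]
  congr 1
  rw [← mul_assoc, inv_mul_cancel₀ (ne_of_gt (pow_pos (Lpos L) _)), one_mul]

lemma Qop_const_mul {N r : ℕ} (hr : r ≤ N) (g : Pt L d N → ℝ) (c : ℝ) (x : Pt L d N) :
    Qop L d r hr (fun y => c * g y) x = c * Qop L d r hr g x := by
  unfold Qop
  rw [← Finset.mul_sum]
  ring

lemma Qop_sum {N r : ℕ} (hr : r ≤ N) {ι : Type*} (s : Finset ι) (u : ι → Pt L d N → ℝ)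
    (x : Pt L d N) :
    Qop L d r hr (fun y => ∑ k ∈ s, u k y) x = ∑ k ∈ s, Qop L d r hr (u k) x := by
  unfold Qop
  rw [Finset.sum_comm, Finset.mul_sum]

@[simp] lemma reindex_rfl {M : ℕ} (z : Pt L d M) : reindex L d rfl z = z := rfl

lemma embed_paste {N j r : ℕ} (hj : j ≤ N) (hr : r ≤ N - j) (hjr : j + r ≤ N)
    (z : Pt L d (N - j)) (a : Fin d → Fin r → ZMod L) :
    paste L d hjr (embed L d hj z) (combine L d j r (fun _ _ => 0) a) =
      embed L d hj (paste L d hr z a) := by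
  funext i k
  unfold paste embed combine
  by_cases h1 : (k:ℕ) < j
  · rw [dif_pos (by omega : (k:ℕ) < j + r), dif_pos h1, dif_neg (by omega)]
  · by_cases h2 : (k:ℕ) < j + r
    · rw [dif_pos h2, dif_neg h1, dif_pos (by omega : j ≤ (k:ℕ))]
      simp only [Fin.val_mk]
      rw [dif_pos (show (k:ℕ) - j < r by omega)]
    · rw [dif_neg h2, dif_pos (by omega : j ≤ (k:ℕ)), dif_pos (by omega : j ≤ (k:ℕ))]
      simp only [Fin.val_mk]
      rw [dif_neg (show ¬((k:ℕ) - j < r) by omega)]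

lemma Qop_local_embed {N j r M m' : ℕ} (hj : j ≤ N) (hM : M = N - j) (hr : r ≤ M)
    (hm : m' ≤ N) (hm' : m' = j + r) {h : Pt L d N → ℝ}
    (hloc : ∀ y a, h (paste L d hj y a) = h y) (z : Pt L d M) :
    Qop L d r hr (fun w => h (embed L d hj (reindex L d hM w))) z =
      Qop L d m' hm h (embed L d hj (reindex L d hM z)) := by
  subst hm' hM
  simp only [reindex_rfl]
  rw [Qop_split L d hm hj h _]
  simp only [Qop_of_local L d hj hloc, embed_paste L d hj hr hm]
  rfl

lemma embed_embed {N j K A n' m' : ℕ} (hj : j ≤ N) (hA : A = N - j) (hK : K ≤ A)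
    (e2 : n' = A - K) (hm : m' ≤ N) (hm' : m' = j + K) (e3 : n' = N - m')
    (z : Pt L d n') :
    embed L d hj (reindex L d hA (embed L d hK (reindex L d e2 z))) =
      embed L d hm (reindex L d e3 z) := by
  subst hm' hA
  simp only [reindex_rfl]
  funext i k
  unfold embed reindex
  by_cases h1 : j + K ≤ (k:ℕ)
  · rw [dif_pos h1, dif_pos (by omega : j ≤ (k:ℕ))]
    simp only [Fin.val_mk]
    rw [dif_pos (show K ≤ ((k:ℕ) - j) by omega)]
    exact congrArg (z i) (Fin.ext (by simp only [Fin.coe_cast, Fin.val_mk]; omega))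
  · by_cases h2 : j ≤ (k:ℕ)
    · rw [dif_neg h1, dif_pos h2]
      simp only [Fin.val_mk]
      rw [dif_neg (show ¬ K ≤ ((k:ℕ) - j) by omega)]
    · rw [dif_neg h1, dif_neg h2]

noncomputable def Hterm {N : ℕ} (f : Pt L d N → ℝ) (j : ℕ) : Pt L d N → ℝ :=
  fun y => Qop L d (min j N) (min_le_right j N) f y *
    (Qop L d (min j N) (min_le_right j N) f y -
      Qop L d (min (j+1) N) (min_le_right (j+1) N) f y)

lemma Hterm_eq {N j : ℕ} (f : Pt L d N → ℝ) (hjN : j ≤ N) (hj1 : j + 1 ≤ N) (y : Pt L d N) :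
    Hterm L d f j y =
      Qop L d j hjN f y * (Qop L d j hjN f y - Qop L d (j+1) hj1 f y) := by
  unfold Hterm
  rw [Qop_natcongr L d (min_eq_left hjN) (min_le_right j N) hjN f y,
    Qop_natcongr L d (min_eq_left hj1) (min_le_right (j+1) N) hj1 f y]

lemma Hterm_local {N j : ℕ} (f : Pt L d N → ℝ) (hj : j ≤ N) (hj1 : j + 1 ≤ N)
    (y : Pt L d N) (a : Fin d → Fin j → ZMod L) :
    Hterm L d f j (paste L d hj y a) = Hterm L d f j y := by
  rw [Hterm_eq L d f hj hj1, Hterm_eq L d f hj hj1]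
  have e1 : Qop L d j hj f (paste L d hj y a) = Qop L d j hj f y := Qop_paste L d hj f y a
  have e2 : Qop L d (j+1) hj1 f (paste L d hj y a) = Qop L d (j+1) hj1 f y :=
    local_mono L d hj hj1 (by omega) (fun y b => Qop_paste L d hj1 f y b) y a
  rw [e1, e2]

end PartA

section PartB
set_option linter.unusedSectionVars false

open Real MeasureTheory ProbabilityTheory

lemma gauss_hasDeriv (x : ℝ) :
    HasDerivAt (fun x : ℝ => -Real.exp (-(1/2) * x ^ 2))
      (x * Real.exp (-(1/2) * x ^ 2)) x := by
  have h1 : HasDerivAt (fun x : ℝ => -(1/2 : ℝ) * x ^ 2) (-(1/2 : ℝ) * (2 * x)) x := by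
    simpa using (hasDerivAt_pow 2 x).const_mul (-(1/2 : ℝ))
  have h2 := h1.exp.neg
  rw [show x * Real.exp (-(1/2) * x ^ 2) = -(Real.exp (-(1/2) * x ^ 2) * (-(1/2) * (2 * x))) by ring]
  exact h2

lemma gauss_int_sq : Integrable (fun x : ℝ => x ^ 2 * Real.exp (-(1/2) * x ^ 2)) := by
  have h := integrable_rpow_mul_exp_neg_mul_sq (show (0:ℝ) < 1/2 by norm_num)
    (show (-1:ℝ) < 2 by norm_num)
  refine h.congr (Filter.Eventually.of_forall fun x => ?_)
  show x ^ (2:ℝ) * rexp (-(1/2) * x ^ 2) = x ^ (2:ℕ) * rexp (-(1/2) * x ^ 2)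
  rw [← Real.rpow_natCast x 2]
  norm_num

lemma gauss_int_exp : Integrable (fun x : ℝ => Real.exp (-(1/2) * x ^ 2)) :=
  integrable_exp_neg_mul_sq (by norm_num)

lemma gauss_int_mul : Integrable (fun x : ℝ => x * Real.exp (-(1/2) * x ^ 2)) :=
  integrable_mul_exp_neg_mul_sq (by norm_num)

lemma gauss_tendsto_bot :
    Filter.Tendsto (fun x : ℝ => -Real.exp (-(1/2) * x ^ 2)) Filter.atBot (nhds 0) := by
  have hsq : Filter.Tendsto (fun x : ℝ => x ^ 2) Filter.atBot Filter.atTop := by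
    have := (tendsto_pow_atTop (two_ne_zero)).comp tendsto_neg_atBot_atTop (α := ℝ)
    simpa [Function.comp_def, neg_sq] using this
  have h1 : Filter.Tendsto (fun x : ℝ => -(1/2 : ℝ) * x ^ 2) Filter.atBot Filter.atBot :=
    hsq.const_mul_atTop_of_neg (by norm_num)
  have := (Real.tendsto_exp_atBot.comp h1).neg
  simpa using this

lemma gauss_tendsto_top :
    Filter.Tendsto (fun x : ℝ => -Real.exp (-(1/2) * x ^ 2)) Filter.atTop (nhds 0) := by
  have h1 : Filter.Tendsto (fun x : ℝ => -(1/2 : ℝ) * x ^ 2) Filter.atTop Filter.atBot :=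
    (tendsto_pow_atTop (two_ne_zero)).const_mul_atTop_of_neg (by norm_num)
  have := (Real.tendsto_exp_atBot.comp h1).neg
  simpa using this

lemma gauss_integral_mul : ∫ x : ℝ, x * Real.exp (-(1/2) * x ^ 2) = 0 := by
  have h := integral_of_hasDerivAt_of_tendsto gauss_hasDeriv gauss_int_mul
    gauss_tendsto_bot gauss_tendsto_top
  simpa using h

lemma gauss_integral_sq :
    ∫ x : ℝ, x ^ 2 * Real.exp (-(1/2) * x ^ 2) = Real.sqrt (2 * π) := by
  have h := integral_mul_deriv_eq_deriv_mul_of_integrable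
    (u := fun y : ℝ => y) (u' := fun _ => (1:ℝ))
    (v := fun x : ℝ => -Real.exp (-(1/2) * x ^ 2))
    (v' := fun x : ℝ => x * Real.exp (-(1/2) * x ^ 2))
    (fun x _ => hasDerivAt_id x) (fun x _ => gauss_hasDeriv x)
    (gauss_int_sq.congr (Filter.Eventually.of_forall fun x => by
      simp only [Pi.mul_apply, Pi.neg_apply]; ring))
    ((gauss_int_exp.neg).congr (Filter.Eventually.of_forall fun x => by
      simp only [Pi.mul_apply, Pi.neg_apply]; ring))
    ((gauss_int_mul.neg).congr (Filter.Eventually.of_forall fun x => by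
      simp only [Pi.mul_apply, Pi.neg_apply]; ring))
  rw [show (fun x : ℝ => x ^ 2 * Real.exp (-(1/2) * x ^ 2)) =
    fun x : ℝ => x * (x * Real.exp (-(1/2) * x ^ 2)) from funext fun x => by ring]
  rw [h]
  rw [show (∫ x : ℝ, (1:ℝ) * -Real.exp (-(1/2) * x ^ 2)) =
    -∫ x : ℝ, Real.exp (-(1/2) * x ^ 2) from by
      rw [← integral_neg]; congr 1; funext x; ring]
  rw [integral_gaussian]
  rw [neg_neg]
  congr 1
  rw [div_div_eq_mul_div]
  norm_num
  ring

lemma gauss_pdf_form (x : ℝ) :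
    gaussianPDFReal 0 1 x = (Real.sqrt (2 * π))⁻¹ * Real.exp (-(1/2) * x ^ 2) := by
  rw [gaussianPDFReal]
  push_cast
  norm_num
  left
  ring

lemma gauss_density : gaussianReal 0 1 =
    MeasureTheory.Measure.withDensity volume (gaussianPDF 0 1) :=
  gaussianReal_of_var_ne_zero 0 one_ne_zero

lemma gauss_pdf_toNN : gaussianPDF 0 1 =
    fun x => ((gaussianPDFReal 0 1 x).toNNReal : ENNReal) := rfl

lemma gauss_integral_eq (g : ℝ → ℝ) :
    ∫ x, g x ∂(gaussianReal 0 1) = ∫ x, gaussianPDFReal 0 1 x * g x := by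
  rw [gauss_density, gauss_pdf_toNN,
    integral_withDensity_eq_integral_smul (measurable_gaussianPDFReal 0 1).real_toNNReal g]
  congr 1
  funext x
  simp only [NNReal.smul_def, smul_eq_mul, Real.coe_toNNReal _ (gaussianPDFReal_nonneg 0 1 x)]

lemma sqrt2pi_pos : (0:ℝ) < Real.sqrt (2 * π) :=
  Real.sqrt_pos.mpr (by positivity)

lemma gauss_moment_one : ∫ x, x ∂(gaussianReal 0 1) = 0 := by
  rw [gauss_integral_eq (fun x => x)]
  rw [show (fun x : ℝ => gaussianPDFReal 0 1 x * x) =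
    fun x : ℝ => (Real.sqrt (2 * π))⁻¹ * (x * Real.exp (-(1/2) * x ^ 2)) from
    funext fun x => by rw [gauss_pdf_form]; ring]
  rw [integral_const_mul, gauss_integral_mul, mul_zero]

lemma gauss_moment_sq : ∫ x, x * x ∂(gaussianReal 0 1) = 1 := by
  rw [gauss_integral_eq (fun x => x * x)]
  rw [show (fun x : ℝ => gaussianPDFReal 0 1 x * (x * x)) =
    fun x : ℝ => (Real.sqrt (2 * π))⁻¹ * (x ^ 2 * Real.exp (-(1/2) * x ^ 2)) from
    funext fun x => by rw [gauss_pdf_form]; ring]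
  rw [integral_const_mul, gauss_integral_sq, inv_mul_cancel₀ (ne_of_gt sqrt2pi_pos)]

lemma gauss_integrable_id : Integrable (fun x : ℝ => x) (gaussianReal 0 1) := by
  rw [gauss_density, gauss_pdf_toNN]
  rw [integrable_withDensity_iff (measurable_gaussianPDFReal 0 1).real_toNNReal.coe_nnreal_ennreal
    (Filter.Eventually.of_forall fun x => ENNReal.coe_lt_top)]
  refine ((gauss_int_mul.const_mul ((Real.sqrt (2 * π))⁻¹)).congr
    (Filter.Eventually.of_forall fun x => ?_))
  dsimp only
  rw [ENNReal.coe_toReal, Real.coe_toNNReal _ (gaussianPDFReal_nonneg 0 1 x), gauss_pdf_form]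
  ring

lemma gauss_integrable_sq : Integrable (fun x : ℝ => x * x) (gaussianReal 0 1) := by
  rw [gauss_density, gauss_pdf_toNN]
  rw [integrable_withDensity_iff (measurable_gaussianPDFReal 0 1).real_toNNReal.coe_nnreal_ennreal
    (Filter.Eventually.of_forall fun x => ENNReal.coe_lt_top)]
  refine ((gauss_int_sq.const_mul ((Real.sqrt (2 * π))⁻¹)).congr
    (Filter.Eventually.of_forall fun x => ?_))
  dsimp only
  rw [ENNReal.coe_toReal, Real.coe_toNNReal _ (gaussianPDFReal_nonneg 0 1 x), gauss_pdf_form]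
  ring

end PartB

section PartC
set_option linter.unusedSectionVars false

open MeasureTheory ProbabilityTheory

lemma Qop_zero {N : ℕ} (h0 : 0 ≤ N) (g : Pt L d N → ℝ) (x : Pt L d N) :
    Qop L d 0 h0 g x = g x := by
  have hp : ∀ a : Fin d → Fin 0 → ZMod L, paste L d h0 x a = x := by
    intro a; funext i k; unfold paste; rw [dif_neg (by omega)]
  unfold Qop
  simp only [hp]
  rw [Finset.sum_const, Finset.card_univ, card_digits]
  simp

lemma sum_ite_paste {N r : ℕ} (hr : r ≤ N) (x : Pt L d N) :
    ∑ a : Fin d → Fin r → ZMod L, (if paste L d hr x a = x then (1:ℝ) else 0) = 1 := by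
  classical
  have key : ∀ a : Fin d → Fin r → ZMod L, (paste L d hr x a = x) ↔
      a = fun i t => x i ⟨t.1, lt_of_lt_of_le t.isLt hr⟩ := by
    intro a
    constructor
    · intro h
      funext i t
      have h2 := congrFun (congrFun h i) ⟨t.1, lt_of_lt_of_le t.isLt hr⟩
      unfold paste at h2
      simp only [Fin.val_mk] at h2
      rw [dif_pos t.isLt] at h2
      exact h2
    · intro h
      subst h
      funext i k
      unfold paste
      by_cases hk : (k:ℕ) < r
      · rw [dif_pos hk]
      · rw [dif_neg hk]
  simp only [key]
  rw [Finset.sum_ite_eq' Finset.univ _ (fun _ => (1:ℝ))]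
  simp

variable {Ω : Type*} [MeasurableSpace Ω] {P : Measure Ω} [IsProbabilityMeasure P]

lemma xi_integrable (W : WhiteNoise L d P) {M : ℕ} (x : Pt L d M) :
    Integrable (W.ξ M x) P := by
  have h := (integrable_map_measure (f := W.ξ M x) (g := fun t : ℝ => t)
      (by rw [W.gauss]; exact aestronglyMeasurable_id) (W.meas M x).aemeasurable).mp
      (by rw [W.gauss]; exact gauss_integrable_id)
  exact h

lemma xi_sq_integrable (W : WhiteNoise L d P) {M : ℕ} (x : Pt L d M) :
    Integrable (fun ω => W.ξ M x ω * W.ξ M x ω) P := by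
  have h := (integrable_map_measure (f := W.ξ M x) (g := fun t : ℝ => t * t)
      (by rw [W.gauss]; exact (aestronglyMeasurable_id.mul aestronglyMeasurable_id))
      (W.meas M x).aemeasurable).mp
      (by rw [W.gauss]; exact gauss_integrable_sq)
  exact h

lemma xi_mean (W : WhiteNoise L d P) {M : ℕ} (x : Pt L d M) :
    ∫ ω, W.ξ M x ω ∂P = 0 := by
  have h := integral_map (φ := W.ξ M x) (f := fun t : ℝ => t)
      (W.meas M x).aemeasurable (by rw [W.gauss]; exact aestronglyMeasurable_id)
  rw [← h, W.gauss]
  exact gauss_moment_one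

lemma xi_sq_mean (W : WhiteNoise L d P) {M : ℕ} (x : Pt L d M) :
    ∫ ω, W.ξ M x ω * W.ξ M x ω ∂P = 1 := by
  have h := integral_map (φ := W.ξ M x) (f := fun t : ℝ => t * t)
      (W.meas M x).aemeasurable
      (by rw [W.gauss]; exact (aestronglyMeasurable_id.mul aestronglyMeasurable_id))
  rw [← h, W.gauss]
  exact gauss_moment_sq

lemma xi_cov (W : WhiteNoise L d P) {M : ℕ} (x y : Pt L d M) :
    ∫ ω, W.ξ M x ω * W.ξ M y ω ∂P = if x = y then 1 else 0 := by
  by_cases h : x = y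
  · subst h; rw [if_pos rfl]; exact xi_sq_mean L d W x
  · rw [if_neg h]
    have hind : IndepFun (W.ξ M x) (W.ξ M y) P := (W.indep M).indepFun h
    have hmul := hind.integral_mul_eq_mul_integral (xi_integrable L d W x).aestronglyMeasurable
      (xi_integrable L d W y).aestronglyMeasurable
    rw [show (fun ω => W.ξ M x ω * W.ξ M y ω) = W.ξ M x * W.ξ M y from rfl, hmul,
      xi_mean L d W x, zero_mul]

lemma xi_mul_integrable (W : WhiteNoise L d P) {M : ℕ} (x y : Pt L d M) :
    Integrable (fun ω => W.ξ M x ω * W.ξ M y ω) P := by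
  by_cases h : x = y
  · subst h; exact xi_sq_integrable L d W x
  · have hind : IndepFun (W.ξ M x) (W.ξ M y) P := (W.indep M).indepFun h
    exact hind.integrable_mul (xi_integrable L d W x) (xi_integrable L d W y)

lemma xi_Qop_expand (W : WhiteNoise L d P) {M r : ℕ} (hr : r ≤ M) (x : Pt L d M) :
    (fun ω => W.ξ M x ω * Qop L d r hr (fun y => W.ξ M y ω) x) =
      fun ω => ∑ a : Fin d → Fin r → ZMod L,
        ((L:ℝ) ^ (r * d))⁻¹ * (W.ξ M x ω * W.ξ M (paste L d hr x a) ω) := by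
  funext ω
  unfold Qop
  rw [Finset.mul_sum, Finset.mul_sum]
  exact Finset.sum_congr rfl fun a _ => by ring

lemma xi_Qop_integrable (W : WhiteNoise L d P) {M r : ℕ} (hr : r ≤ M) (x : Pt L d M) :
    Integrable (fun ω => W.ξ M x ω * Qop L d r hr (fun y => W.ξ M y ω) x) P := by
  rw [xi_Qop_expand]
  exact integrable_finset_sum _ fun a _ => (xi_mul_integrable L d W x _).const_mul _

lemma xi_Qop_integral (W : WhiteNoise L d P) {M r : ℕ} (hr : r ≤ M) (x : Pt L d M) :
    ∫ ω, W.ξ M x ω * Qop L d r hr (fun y => W.ξ M y ω) x ∂P = ((L:ℝ) ^ (r * d))⁻¹ := by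
  rw [xi_Qop_expand]
  rw [integral_finset_sum _ fun a _ => (xi_mul_integrable L d W x _).const_mul _]
  simp only [integral_const_mul, xi_cov]
  have hsym : ∀ a : Fin d → Fin r → ZMod L,
      (if x = paste L d hr x a then (1:ℝ) else 0) =
        (if paste L d hr x a = x then (1:ℝ) else 0) := fun a => by
    by_cases h : x = paste L d hr x a
    · rw [if_pos h, if_pos h.symm]
    · rw [if_neg h, if_neg (fun h' => h h'.symm)]
  simp only [hsym]
  rw [← Finset.mul_sum, sum_ite_paste L d hr x, mul_one]

lemma iter_consistency (W : WhiteNoise L d P) (N : ℕ) :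
    ∀ j, ∀ hj : j ≤ N, ∀ M, ∀ hM : M = N - j, ∀ᵐ ω ∂P, ∀ w : Pt L d M,
      W.ξ M w ω = (L:ℝ) ^ (((d:ℝ)/2) * (j:ℝ)) *
        Qop L d j hj (fun y => W.ξ N y ω) (embed L d hj (reindex L d hM w)) := by
  intro j
  induction j with
  | zero =>
    intro hj M hM
    obtain rfl : M = N := by omega
    refine Filter.Eventually.of_forall fun ω w => ?_
    have hew : embed L d hj (reindex L d hM w) = w := by
      funext i k
      unfold embed reindex
      rw [dif_pos (Nat.zero_le _)]
      exact congrArg (w i) (Fin.ext (by simp only [Fin.coe_cast, Fin.val_mk]; omega))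
    rw [show ((d:ℝ)/2) * ((0:ℕ):ℝ) = 0 by norm_num, Real.rpow_zero, one_mul,
      Qop_zero, hew]
  | succ j IH =>
    intro hj1 M hM
    subst hM
    have hj : j ≤ N := by omega
    filter_upwards [W.consistent (N - (j+1)), IH hj (N - (j+1) + 1) (by omega)] with ω hω1 hω2
    intro z
    simp only [reindex_rfl]
    rw [hω1 z]
    unfold scale
    rw [Qop_congr_fun L d (Nat.le_add_left 1 (N - (j+1))) (hfg := hω2) _]
    rw [Qop_const_mul]
    have hloc : ∀ (y : Pt L d N) (b : Fin d → Fin j → ZMod L),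
        Qop L d j hj (fun y' => W.ξ N y' ω) (paste L d hj y b) =
          Qop L d j hj (fun y' => W.ξ N y' ω) y :=
      fun y b => Qop_paste L d hj _ y b
    have hle := Qop_local_embed L d (r := 1) (m' := j + 1) hj
      (show N - (j+1) + 1 = N - j by omega) (by omega) hj1 rfl hloc
      (embed L d (Nat.le_add_left 1 (N - (j+1))) (reindex L d (by omega) z))
    rw [hle]
    have hee := embed_embed L d (j := j) (K := 1) hj
      (show N - (j+1) + 1 = N - j by omega) (by omega)
      (show N - (j+1) = N - (j+1) + 1 - 1 by omega) hj1 rfl rfl z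
    rw [hee, reindex_rfl]
    rw [Qop_Qop L d hj hj1 (by omega) (fun y => W.ξ N y ω) _]
    rw [← mul_assoc, ← Real.rpow_add (Lpos L)]
    congr 2
    push_cast
    ring
end PartC

end Hier

open Hier in
/-- With `α := 2 - d/2` and
`c_{N-n} := E[ ξ_{-N}(x)·(Γ_{N-n}ξ_{-N})(x) ] = (1 - L^{-d}) ∑_{k=1}^{N-n} L^{(2-d)(k-1)}`
(independent of `x`), for every `N` and `0 ≤ n ≤ N`, almost surely:
`L^{(2-2α)(N-n)} · S_{N-n}Q_{N-n}( ξ_{-N} · Γ_{N-n}ξ_{-N} − c_{N-n} )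
  = ∑_{k=1}^{N-n} L^{(2-2α)k} S_kQ_k( ξ_{-n-k} ⋄ P₁ ξ_{-n-k} ) = db^{(N)}_{-n}`. -/
theorem statement_11 (L d : ℕ) [NeZero L] (hL : Odd L) (hL3 : 3 ≤ L) (hd : 1 ≤ d)
    (Ω : Type) [MeasurableSpace Ω] (P : Measure Ω) [IsProbabilityMeasure P]
    (W : WhiteNoise L d P) (N n : ℕ) (hn : n ≤ N) :
    (∀ x : Pt L d N,
      ∫ ω, W.ξ N x ω *
          gammaProp L d (N - n) (Nat.sub_le N n) (fun y => W.ξ N y ω) x ∂P =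
        (1 - ((L : ℝ) ^ d)⁻¹) *
          ∑ k ∈ Finset.Icc 1 (N - n), (L : ℝ) ^ (((2 : ℝ) - (d : ℝ)) * ((k : ℝ) - 1))) ∧
    ∀ᵐ ω ∂P, ∀ z : Pt L d n,
      (L : ℝ) ^ (((2 : ℝ) - 2 * ((2 : ℝ) - (d : ℝ) / 2)) * ((N : ℝ) - (n : ℝ))) *
          scale L d (Nat.sub_le N n)
            (Qop L d (N - n) (Nat.sub_le N n)
              (fun y => W.ξ N y ω *
                  gammaProp L d (N - n) (Nat.sub_le N n) (fun y' => W.ξ N y' ω) y -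
                (1 - ((L : ℝ) ^ d)⁻¹) *
                  ∑ k ∈ Finset.Icc 1 (N - n),
                    (L : ℝ) ^ (((2 : ℝ) - (d : ℝ)) * ((k : ℝ) - 1))))
            (reindex L d (show n = N - (N - n) by omega) z) =
        db L d W N n ω z := by
  classical
  have hL0 : (0:ℝ) < (L:ℝ) := Lpos L
  have hpow : ∀ a : ℕ, ((L:ℝ) ^ a) = (L:ℝ) ^ ((a : ℕ) : ℝ) :=
    fun a => (Real.rpow_natCast _ _).symm
  have hinv : ∀ a : ℕ, ((L:ℝ) ^ a)⁻¹ = (L:ℝ) ^ (-((a : ℕ) : ℝ)) := fun a => by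
    rw [hpow, ← Real.rpow_neg hL0.le]
  constructor
  · -- Part 1: the covariance computation
    intro x
    have hΓ1 : (fun ω => W.ξ N x ω *
        gammaProp L d (N - n) (Nat.sub_le N n) (fun y => W.ξ N y ω) x) =
        fun ω => ∑ k : Fin (N - n), (L:ℝ) ^ (2 * (k:ℕ)) *
          (W.ξ N x ω * Qop L d (k:ℕ) (le_trans k.isLt.le (Nat.sub_le N n))
              (fun y => W.ξ N y ω) x -
            W.ξ N x ω * Qop L d ((k:ℕ)+1) (le_trans k.isLt (Nat.sub_le N n))
              (fun y => W.ξ N y ω) x) := by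
      funext ω
      unfold gammaProp Pop
      rw [Finset.mul_sum]
      refine Finset.sum_congr rfl fun k _ => ?_
      rw [Qop_natcongr L d (show (k:ℕ)+1-1 = (k:ℕ) by omega)
        (le_trans (Nat.sub_le _ 1) (le_trans k.isLt (Nat.sub_le N n)))
        (le_trans k.isLt.le (Nat.sub_le N n)) (fun y => W.ξ N y ω) x]
      ring
    rw [hΓ1]
    have hInt : ∀ k : Fin (N - n), Integrable (fun ω => (L:ℝ) ^ (2 * (k:ℕ)) *
        (W.ξ N x ω * Qop L d (k:ℕ) (le_trans k.isLt.le (Nat.sub_le N n))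
            (fun y => W.ξ N y ω) x -
          W.ξ N x ω * Qop L d ((k:ℕ)+1) (le_trans k.isLt (Nat.sub_le N n))
            (fun y => W.ξ N y ω) x)) P := by
      intro k
      refine Integrable.const_mul ?_ _
      exact (xi_Qop_integrable L d W _ x).sub (xi_Qop_integrable L d W _ x)
    rw [integral_finset_sum _ (fun k _ => hInt k)]
    have hval : ∀ k : Fin (N - n),
        (∫ ω, (L:ℝ) ^ (2 * (k:ℕ)) *
          (W.ξ N x ω * Qop L d (k:ℕ) (le_trans k.isLt.le (Nat.sub_le N n))
              (fun y => W.ξ N y ω) x -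
            W.ξ N x ω * Qop L d ((k:ℕ)+1) (le_trans k.isLt (Nat.sub_le N n))
              (fun y => W.ξ N y ω) x) ∂P) =
          (L:ℝ) ^ (2 * (k:ℕ)) * (((L:ℝ) ^ ((k:ℕ) * d))⁻¹ - ((L:ℝ) ^ (((k:ℕ)+1) * d))⁻¹) := by
      intro k
      rw [integral_const_mul, integral_sub (xi_Qop_integrable L d W _ x)
        (xi_Qop_integrable L d W _ x), xi_Qop_integral L d W _ x, xi_Qop_integral L d W _ x]
    rw [Finset.sum_congr rfl fun k _ => hval k]
    -- numeric evaluation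
    rw [Finset.mul_sum]
    rw [← Finset.Ico_add_one_right_eq_Icc, Finset.sum_Ico_eq_sum_range]
    rw [show N - n + 1 - 1 = N - n from by omega]
    rw [Fin.sum_univ_eq_sum_range (fun k : ℕ => (L:ℝ) ^ (2 * k) *
      (((L:ℝ) ^ (k * d))⁻¹ - ((L:ℝ) ^ ((k+1) * d))⁻¹)) (N - n)]
    refine Finset.sum_congr rfl fun i _ => ?_
    rw [hpow (2*i), hinv (i*d), hinv ((i+1)*d), hinv d, mul_sub, sub_mul, one_mul,
      ← Real.rpow_add hL0, ← Real.rpow_add hL0, ← Real.rpow_add hL0]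
    congr 1 <;> · congr 1; push_cast; ring
  · -- Part 2: the almost-sure identity
    have hmain := ae_all_iff.mpr (fun k : Fin (N - n) =>
      iter_consistency L d W N (N - n - ((k:ℕ)+1)) (by omega) (n + ((k:ℕ)+1)) (by omega))
    filter_upwards [hmain] with ω hω
    intro z
    set f : Pt L d N → ℝ := fun y => W.ξ N y ω with hf
    set p : Pt L d N :=
      embed L d (Nat.sub_le N n) (reindex L d (show n = N - (N - n) by omega) z) with hp
    set Cc : ℝ := (1 - ((L : ℝ) ^ d)⁻¹) *
      ∑ k ∈ Finset.Icc 1 (N - n), (L : ℝ) ^ (((2 : ℝ) - (d : ℝ)) * ((k : ℝ) - 1)) with hCc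
    -- LHS reduction
    show (L : ℝ) ^ (((2 : ℝ) - 2 * ((2 : ℝ) - (d : ℝ) / 2)) * ((N : ℝ) - (n : ℝ))) *
        (Qop L d (N - n) (Nat.sub_le N n)
          (fun y => f y * gammaProp L d (N - n) (Nat.sub_le N n) f y - Cc)) p =
      db L d W N n ω z
    have hΓ : (fun y => f y * gammaProp L d (N - n) (Nat.sub_le N n) f y - Cc) =
        fun y => (∑ k : Fin (N - n), (L:ℝ) ^ (2 * (k:ℕ)) *
          (f y * Pop L d ((k:ℕ)+1) (le_trans k.isLt (Nat.sub_le N n)) f y)) - Cc := by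
      funext y
      unfold gammaProp
      rw [Finset.mul_sum]
      congr 1
      exact Finset.sum_congr rfl fun k _ => by ring
    rw [hΓ, Qop_sub_const, Qop_sum]
    -- per-k reduction of the LHS summands
    have hterm : ∀ k : Fin (N - n),
        Qop L d (N - n) (Nat.sub_le N n) (fun y => (L:ℝ) ^ (2 * (k:ℕ)) *
          (f y * Pop L d ((k:ℕ)+1) (le_trans k.isLt (Nat.sub_le N n)) f y)) p =
        (L:ℝ) ^ (2 * (k:ℕ)) *
          Qop L d (N - n) (Nat.sub_le N n) (Hterm L d f (k:ℕ)) p := by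
      intro k
      have hkN : (k:ℕ) ≤ N := by have := k.isLt; omega
      have hk1N : (k:ℕ) + 1 ≤ N := by have := k.isLt; omega
      rw [Qop_const_mul]
      congr 1
      have hloc : ∀ (y : Pt L d N) (a : Fin d → Fin (k:ℕ) → ZMod L),
          Pop L d ((k:ℕ)+1) (le_trans k.isLt (Nat.sub_le N n)) f (paste L d hkN y a) =
          Pop L d ((k:ℕ)+1) (le_trans k.isLt (Nat.sub_le N n)) f y := by
        intro y a
        unfold Pop
        rw [Qop_natcongr L d (show (k:ℕ)+1-1 = (k:ℕ) by omega)
          (le_trans (Nat.sub_le _ 1) (le_trans k.isLt (Nat.sub_le N n))) hkN f,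
          Qop_natcongr L d (show (k:ℕ)+1-1 = (k:ℕ) by omega)
          (le_trans (Nat.sub_le _ 1) (le_trans k.isLt (Nat.sub_le N n))) hkN f,
          Qop_paste L d hkN f y a,
          local_mono L d hkN hk1N (by omega)
            (fun y' b => Qop_paste L d hk1N f y' b) y a]
      rw [Qop_mul_local L d hkN (Nat.sub_le N n) (by have := k.isLt; omega) f _ hloc p]
      refine Qop_congr_fun L d (Nat.sub_le N n) (fun y => ?_) p
      rw [Hterm_eq L d f hkN hk1N y]
      unfold Pop
      rw [Qop_natcongr L d (show (k:ℕ)+1-1 = (k:ℕ) by omega)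
        (le_trans (Nat.sub_le _ 1) (le_trans k.isLt (Nat.sub_le N n))) hkN f,
        Qop_natcongr L d rfl (le_trans k.isLt (Nat.sub_le N n)) hk1N f]
    rw [Finset.sum_congr rfl fun k _ => hterm k]
    -- RHS (db) reduction
    have hdb : db L d W N n ω z = ∑ k : Fin (N - n),
        ((L:ℝ) ^ (((2 : ℝ) - 2 * ((2 : ℝ) - (d : ℝ) / 2)) * (((k:ℕ) : ℝ) + 1)) *
          (((L:ℝ) ^ (((d:ℝ)/2) * ((N - n - ((k:ℕ)+1) : ℕ) : ℝ)) *
            (L:ℝ) ^ (((d:ℝ)/2) * ((N - n - ((k:ℕ)+1) : ℕ) : ℝ))) *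
            Qop L d (N - n) (Nat.sub_le N n) (Hterm L d f (N - n - ((k:ℕ)+1))) p) -
          (L:ℝ) ^ (((2 : ℝ) - 2 * ((2 : ℝ) - (d : ℝ) / 2)) * (((k:ℕ) : ℝ) + 1)) *
            (1 - ((L:ℝ) ^ d)⁻¹)) := by
      unfold db
      refine Finset.sum_congr rfl fun k _ => ?_
      have hK : (k:ℕ) + 1 ≤ N - n := k.isLt
      set j : ℕ := N - n - ((k:ℕ)+1) with hj
      have hjN : j ≤ N := by omega
      have hj1N : j + 1 ≤ N := by omega
      have hMk : n + ((k:ℕ)+1) = N - j := by omega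
      have hωk := hω k
      set cj : ℝ := (L:ℝ) ^ (((d:ℝ)/2) * (j : ℝ)) with hcj
      unfold scale
      -- the wick product
      show _ * Qop L d ((k:ℕ)+1) (Nat.le_add_left ((k:ℕ)+1) n)
          (wickP1 L d (by omega) (fun y => W.ξ (n + ((k:ℕ)+1)) y ω))
          (embed L d (Nat.le_add_left ((k:ℕ)+1) n) (reindex L d (by omega) z)) = _
      have hwick : wickP1 L d (show 1 ≤ n + ((k:ℕ)+1) by omega)
          (fun y => W.ξ (n + ((k:ℕ)+1)) y ω) =
          fun w => (fun w' => W.ξ (n + ((k:ℕ)+1)) w' ω *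
            Pop L d 1 (show 1 ≤ n + ((k:ℕ)+1) by omega)
              (fun y => W.ξ (n + ((k:ℕ)+1)) y ω) w') w - (1 - ((L:ℝ) ^ d)⁻¹) := rfl
      rw [hwick, Qop_sub_const]
      have hfk : (fun w' => W.ξ (n + ((k:ℕ)+1)) w' ω *
          Pop L d 1 (show 1 ≤ n + ((k:ℕ)+1) by omega)
            (fun y => W.ξ (n + ((k:ℕ)+1)) y ω) w') =
          fun w' => (cj * cj) *
            Hterm L d f j (embed L d hjN (reindex L d hMk w')) := by
        funext w
        have h1 : W.ξ (n + ((k:ℕ)+1)) w ω =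
            cj * Qop L d j hjN f (embed L d hjN (reindex L d hMk w)) := hωk w
        have h2 : Pop L d 1 (show 1 ≤ n + ((k:ℕ)+1) by omega)
            (fun y => W.ξ (n + ((k:ℕ)+1)) y ω) w =
            cj * Qop L d j hjN f (embed L d hjN (reindex L d hMk w)) -
            cj * Qop L d (j+1) hj1N f (embed L d hjN (reindex L d hMk w)) := by
          unfold Pop
          rw [Qop_natcongr L d (show 1-1 = 0 by omega)
            (le_trans (Nat.sub_le 1 1) (show 1 ≤ n + ((k:ℕ)+1) by omega)) (Nat.zero_le _)
            (fun y => W.ξ (n + ((k:ℕ)+1)) y ω) w, Qop_zero, hωk w]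
          rw [Qop_congr_fun L d (show 1 ≤ n + ((k:ℕ)+1) by omega) (hfg := hωk) w,
            Qop_const_mul]
          have hle := Qop_local_embed L d (r := 1) (m' := j + 1) hjN hMk (by omega)
            hj1N rfl (fun y b => Qop_paste L d hjN f y b) w
          rw [hle, Qop_Qop L d hjN hj1N (by omega) f _]
        rw [h1, h2, Hterm_eq L d f hjN hj1N]
        ring
      rw [hfk, Qop_const_mul]
      have hle2 := Qop_local_embed L d (r := (k:ℕ)+1) (m' := N - n) hjN hMk
        (by omega) (Nat.sub_le N n) (by omega)
        (fun y b => Hterm_local L d f hjN hj1N y b)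
        (embed L d (Nat.le_add_left ((k:ℕ)+1) n) (reindex L d (by omega) z))
      rw [hle2]
      have hee := embed_embed L d (j := j) (K := (k:ℕ)+1) hjN hMk
        (Nat.le_add_left ((k:ℕ)+1) n) (by omega) (Nat.sub_le N n) (by omega)
        (show n = N - (N - n) by omega) z
      rw [hee]
      rw [show embed L d (Nat.sub_le N n)
        (reindex L d (show n = N - (N - n) by omega) z) = p from rfl]
      ring
    rw [hdb]
    rw [Finset.sum_sub_distrib]
    rw [mul_sub, Finset.mul_sum]
    congr 1
    · -- the main sums
      refine Fintype.sum_bijective Fin.rev Fin.rev_bijective _ _ fun i => ?_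
      rw [Fin.val_rev]
      rw [show N - n - (N - n - ((i:ℕ) + 1) + 1) = (i:ℕ) from by have := i.isLt; omega]
      rw [← mul_assoc, ← mul_assoc]
      congr 1
      rw [hpow (2 * (i:ℕ)), ← Real.rpow_add hL0, ← Real.rpow_add hL0, ← Real.rpow_add hL0]
      congr 1
      have hi := i.isLt
      rw [Nat.cast_sub (show (i:ℕ) + 1 ≤ N - n from hi), Nat.cast_sub (show n ≤ N from hn)]
      push_cast
      ring
    · -- the constants
      rw [hCc, Finset.mul_sum, Finset.mul_sum]
      rw [← Finset.Ico_add_one_right_eq_Icc, Finset.sum_Ico_eq_sum_range,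
        show N - n + 1 - 1 = N - n from by omega]
      rw [Fin.sum_univ_eq_sum_range (fun k : ℕ =>
        (L:ℝ) ^ (((2 : ℝ) - 2 * ((2 : ℝ) - (d : ℝ) / 2)) * ((k : ℝ) + 1)) *
          (1 - ((L:ℝ) ^ d)⁻¹)) (N - n)]
      rw [← Finset.sum_range_reflect]
      refine Finset.sum_congr rfl fun i hi => ?_
      rw [Finset.mem_range] at hi
      rw [hinv d]
      rw [show 1 + (N - n - 1 - i) = N - n - i from by omega]
      rw [Nat.cast_sub (show i ≤ N - n from by omega), Nat.cast_sub (show n ≤ N from hn)]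
      rw [mul_left_comm, mul_comm _ (1 - (L:ℝ) ^ (-((d:ℕ):ℝ)))]
      congr 1
      rw [← Real.rpow_add hL0]
      congr 1
      push_cast
      ring
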